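/- For every λ > 16/9 there exist a function f analytic on the open unit disk D with |f(z)| ≤ 1 on D (one may take f(z) = (a-z)/(1-az) with a ∈ [0,1) close enough to 1) such that at r = 1/3 one has ∑_{k=0}^∞ |a_k| r^k + λ ∑_{k=1}^∞ k |a_k|^2 r^{2k} > 1, where a_k are the Taylor coefficients of f. Hence the constant 16/9 in the improved Bohr inequality ∑_{k=0}^∞ |a_k| r^k + (16/9)(S_r/π) ≤ 1 (r ≤ 1/3) cannot be improved. -/

import Mathlib

open Metric

private def mobC (a : ℝ) : ℕ → ℂ := fun k =>
  match k with
  | 0 => (a:ℂ)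
  | n+1 => -(1-(a:ℂ)^2)*(a:ℂ)^n

private lemma mobC_zero (a : ℝ) : mobC a 0 = (a:ℂ) := rfl
private lemma mobC_succ (a : ℝ) (n : ℕ) : mobC a (n+1) = -(1-(a:ℂ)^2)*(a:ℂ)^n := rfl

private lemma mob_aznorm {a : ℝ} (ha0 : 0 ≤ a) (ha1 : a < 1) {z : ℂ} (hz : ‖z‖ < 1) :
    ‖(a:ℂ)*z‖ < 1 := by
  rw [norm_mul, Complex.norm_real, Real.norm_eq_abs, abs_of_nonneg ha0]
  calc a * ‖z‖ ≤ 1 * ‖z‖ := mul_le_mul_of_nonneg_right (le_of_lt ha1) (norm_nonneg z)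
    _ < 1 := by linarith

private lemma mob_ne {a : ℝ} (ha0 : 0 ≤ a) (ha1 : a < 1) {z : ℂ} (hz : ‖z‖ < 1) :
    (1:ℂ) - (a:ℂ)*z ≠ 0 := by
  intro h
  have haz := mob_aznorm ha0 ha1 hz
  rw [sub_eq_zero] at h
  rw [← h] at haz
  simp at haz

private lemma mob_hasSum {a : ℝ} (ha0 : 0 ≤ a) (ha1 : a < 1) {z : ℂ} (hz : ‖z‖ < 1) :
    HasSum (fun k : ℕ => mobC a k * z ^ k) (((a:ℂ) - z)/(1 - (a:ℂ)*z)) := by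
  have haz := mob_aznorm ha0 ha1 hz
  have hne := mob_ne ha0 ha1 hz
  have h1 := hasSum_geometric_of_norm_lt_one haz
  have h2 := h1.mul_left (-(1-(a:ℂ)^2)*z)
  have h3 : HasSum (fun k : ℕ => mobC a (k+1) * z ^ (k+1))
      (-(1-(a:ℂ)^2)*z * (1 - (a:ℂ)*z)⁻¹) := by
    refine h2.congr_fun fun k => ?_
    rw [mobC_succ, mul_pow]
    ring
  have h4 := (hasSum_nat_add_iff (f := fun k : ℕ => mobC a k * z ^ k) 1).mp h3
  have heq : (-(1-(a:ℂ)^2)*z * (1 - (a:ℂ)*z)⁻¹ + ∑ i ∈ Finset.range 1, mobC a i * z ^ i)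
      = ((a:ℂ) - z)/(1 - (a:ℂ)*z) := by
    rw [Finset.range_one, Finset.sum_singleton, mobC_zero, pow_zero, mul_one]
    field_simp
    ring
  rwa [heq] at h4

private lemma mob_bound {a : ℝ} (ha0 : 0 ≤ a) (ha1 : a < 1) {z : ℂ} (hz : ‖z‖ < 1) :
    ‖((a:ℂ) - z)/(1 - (a:ℂ)*z)‖ ≤ 1 := by
  have hne := mob_ne ha0 ha1 hz
  have hzsq : z.re^2 + z.im^2 < 1 := by
    have h1 := Complex.sq_norm z
    rw [Complex.normSq_apply] at h1
    have h2 : ‖z‖ < 1 := hz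
    nlinarith [norm_nonneg z]
  rw [norm_div]
  rw [div_le_one (norm_pos_iff.mpr hne)]
  have e1 : (‖(a:ℂ) - z‖)^2 = (a - z.re)^2 + z.im^2 := by
    rw [Complex.sq_norm, Complex.normSq_apply]
    simp [Complex.sub_re, Complex.sub_im]
    ring
  have e2 : (‖(1:ℂ) - (a:ℂ)*z‖)^2 = (1 - a*z.re)^2 + (a*z.im)^2 := by
    rw [Complex.sq_norm, Complex.normSq_apply]
    simp [Complex.sub_re, Complex.sub_im, Complex.mul_re, Complex.mul_im]
    ring
  have key : (0:ℝ) ≤ (1-a^2)*(1-(z.re^2+z.im^2)) :=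
    mul_nonneg (by nlinarith) (by linarith)
  have hle : (‖(a:ℂ) - z‖)^2 ≤ (‖(1:ℂ) - (a:ℂ)*z‖)^2 := by
    rw [e1, e2]; nlinarith
  nlinarith [norm_nonneg ((a:ℂ) - z), norm_nonneg ((1:ℂ) - (a:ℂ)*z)]

private lemma mob_abs0 {a : ℝ} (ha0 : 0 ≤ a) : ‖mobC a 0‖ = a := by
  rw [mobC_zero, Complex.norm_real, Real.norm_eq_abs, abs_of_nonneg ha0]

private lemma mob_absS {a : ℝ} (ha0 : 0 ≤ a) (ha1 : a < 1) (n : ℕ) :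
    ‖mobC a (n+1)‖ = (1-a^2)*a^n := by
  rw [mobC_succ]
  have h : -(1-(a:ℂ)^2)*(a:ℂ)^n = ((-(1-a^2)*a^n : ℝ) : ℂ) := by push_cast; ring
  have hsq : a^2 ≤ 1 := by nlinarith
  have hnn : (0:ℝ) ≤ (1-a^2)*a^n := mul_nonneg (by linarith) (pow_nonneg ha0 n)
  rw [h, Complex.norm_real, Real.norm_eq_abs, abs_of_nonpos (by linarith)]
  ring

private lemma mob_sum1 {a : ℝ} (ha0 : 0 ≤ a) (ha1 : a < 1) :
    HasSum (fun k : ℕ => ‖mobC a k‖ * (1/3 : ℝ) ^ k)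
      (a + (1-a^2)/3 * (1 - a/3)⁻¹) := by
  have hr : ‖a/3‖ < 1 := by rw [Real.norm_eq_abs, abs_of_nonneg (by linarith)]; linarith
  have h1 := (hasSum_geometric_of_norm_lt_one hr).mul_left ((1-a^2)/3)
  have h3 : HasSum (fun k : ℕ => ‖mobC a (k+1)‖ * (1/3:ℝ) ^ (k+1))
      ((1-a^2)/3 * (1 - a/3)⁻¹) := by
    refine h1.congr_fun fun k => ?_
    rw [mob_absS ha0 ha1, div_pow]
    simp only [div_pow, one_pow]
    ring
  have h4 := (hasSum_nat_add_iff
    (f := fun k : ℕ => ‖mobC a k‖ * (1/3:ℝ) ^ k) 1).mp h3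
  rw [Finset.range_one, Finset.sum_singleton, pow_zero, mul_one, mob_abs0 ha0,
    add_comm] at h4
  exact h4

private lemma mob_sum2 {a : ℝ} (ha0 : 0 ≤ a) (ha1 : a < 1) :
    HasSum (fun k : ℕ => (k:ℝ) * (‖mobC a k‖)^2 * (1/3 : ℝ) ^ (2*k))
      ((1-a^2)^2/9 * ((1 - a^2/9)⁻¹)^2) := by
  have hx : ‖a^2/9‖ < 1 := by
    rw [Real.norm_eq_abs, abs_of_nonneg (by positivity)]; nlinarith
  have hne : (1:ℝ) - a^2/9 ≠ 0 := by nlinarith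
  have hg := hasSum_geometric_of_norm_lt_one hx
  have hng := hasSum_coe_mul_geometric_of_norm_lt_one hx
  have hsum : HasSum (fun k : ℕ => ((k:ℝ)+1) * (a^2/9)^k) (((1 - a^2/9)⁻¹)^2) := by
    have hadd := hng.add hg
    have h9 : (9:ℝ) - a^2 ≠ 0 := by nlinarith
    have heq : a^2/9 / (1 - a^2/9)^2 + (1 - a^2/9)⁻¹ = ((1 - a^2/9)⁻¹)^2 := by
      field_simp [h9]
      ring
    rw [heq] at hadd
    refine hadd.congr_fun fun k => ?_
    ring
  have h1 := hsum.mul_left ((1-a^2)^2/9)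
  have h3 : HasSum (fun k : ℕ => ((k:ℕ)+1 : ℝ) * (‖mobC a (k+1)‖)^2 * (1/3:ℝ) ^ (2*(k+1)))
      ((1-a^2)^2/9 * ((1 - a^2/9)⁻¹)^2) := by
    refine h1.congr_fun fun k => ?_
    rw [mob_absS ha0 ha1]
    have h9 : ((1:ℝ)/3) ^ (2*(k+1)) = (1/9)^(k+1) := by
      rw [pow_mul]; norm_num
    rw [h9, mul_pow, div_pow, div_pow]
    push_cast
    ring
  have h3' : HasSum (fun k : ℕ =>
      (((k+1 : ℕ)):ℝ) * (‖mobC a (k+1)‖)^2 * (1/3:ℝ) ^ (2*(k+1)))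
      ((1-a^2)^2/9 * ((1 - a^2/9)⁻¹)^2) := by
    refine h3.congr_fun fun k => ?_
    push_cast
    ring
  have h4 := (hasSum_nat_add_iff
    (f := fun k : ℕ => (k:ℝ) * (‖mobC a k‖)^2 * (1/3:ℝ) ^ (2*k)) 1).mp h3'
  rw [Finset.range_one, Finset.sum_singleton] at h4
  simpa using h4

/-- Theorem 3, sharpness of the constant `16/9`: for every `λ > 16/9` there is an
analytic `f : 𝔻 → \overline{𝔻}` with
`∑_{k=0}^∞ |a_k| (1/3)^k + λ ∑_{k=1}^∞ k |a_k|^2 (1/3)^{2k} > 1`. -/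
theorem improved_bohr_area_third_sharp (lam : ℝ) (hlam : 16/9 < lam) :
    ∃ (f : ℂ → ℂ) (a : ℕ → ℂ),
      AnalyticOn ℂ f (ball (0:ℂ) 1) ∧
      (∀ z ∈ ball (0:ℂ) 1, HasSum (fun k : ℕ => a k * z ^ k) (f z)) ∧
      (∀ z ∈ ball (0:ℂ) 1, ‖f z‖ ≤ 1) ∧
      1 < (∑' k : ℕ, ‖a k‖ * (1/3 : ℝ) ^ k) +
        lam * ∑' k : ℕ, (k : ℝ) * (‖a k‖) ^ 2 * (1/3 : ℝ) ^ (2 * k) := by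
  have hlam' : 0 < 9*lam - 16 := by linarith
  obtain ⟨t, ht0, ht2, htl⟩ : ∃ t : ℝ, 0 < t ∧ t ≤ 1/2 ∧ 160 * t ≤ 9*lam - 16 := by
    refine ⟨min (1/2) ((9*lam-16)/160), lt_min (by norm_num) (by linarith), min_le_left _ _, ?_⟩
    have := min_le_right (1/2 : ℝ) ((9*lam-16)/160); linarith
  set a : ℝ := 1 - t with ha_def
  have ha0 : (0:ℝ) ≤ a := by rw [ha_def]; linarith
  have ha1 : a < 1 := by rw [ha_def]; linarith
  refine ⟨fun z => ((a:ℂ) - z)/(1 - (a:ℂ)*z), mobC a, ?_, ?_, ?_, ?_⟩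
  · refine AnalyticOn.div ?_ ?_ ?_
    · exact analyticOn_const.sub analyticOn_id
    · exact analyticOn_const.sub (analyticOn_const.mul analyticOn_id)
    · intro z hz
      have hz' : ‖z‖ < 1 := by simpa [dist_eq_norm] using hz
      exact mob_ne ha0 ha1 hz'
  · intro z hz
    have hz' : ‖z‖ < 1 := by simpa [dist_eq_norm] using hz
    exact mob_hasSum ha0 ha1 hz'
  · intro z hz
    have hz' : ‖z‖ < 1 := by simpa [dist_eq_norm] using hz
    exact mob_bound ha0 ha1 hz'
  · rw [(mob_sum1 ha0 ha1).tsum_eq, (mob_sum2 ha0 ha1).tsum_eq]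
    have h2t : (2:ℝ)+t ≠ 0 := by linarith
    have h4t : (4:ℝ)-t ≠ 0 := by linarith
    have e1 : a + (1-a^2)/3 * (1 - a/3)⁻¹ = 1 - 2*t^2/(2+t) := by
      have h1 : (1:ℝ) - a/3 = (2+t)/3 := by rw [ha_def]; ring
      rw [h1, ha_def]
      field_simp
      ring
    have e2 : (1-a^2)^2/9 * ((1 - a^2/9)⁻¹)^2 = 9*t^2*(2-t)^2/((2+t)^2*(4-t)^2) := by
      have h1 : (1:ℝ) - a^2/9 = (2+t)*(4-t)/9 := by rw [ha_def]; ring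
      rw [h1, ha_def]
      field_simp
      ring
    rw [e1, e2]
    have key : 2*t^2/(2+t) < lam * (9*t^2*(2-t)^2/((2+t)^2*(4-t)^2)) := by
      rw [mul_div_assoc']
      rw [div_lt_div_iff₀ (by linarith) (by positivity)]
      have k1 : 2*(2+t)*(4-t)^2 ≤ (16+80*t)*(2-t)^2 := by nlinarith [sq_nonneg t, ht0.le]
      have k2 : 16+80*t < 9*lam := by linarith
      have h2mt : (0:ℝ) < 2 - t := by linarith
      have hp : (0:ℝ) < t^2*(2+t) := by positivity
      have hq : (0:ℝ) < t^2*(2+t)*(2-t)^2 := by positivity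
      calc 2*t^2*((2+t)^2*(4-t)^2) = (t^2*(2+t)) * (2*(2+t)*(4-t)^2) := by ring
        _ ≤ (t^2*(2+t)) * ((16+80*t)*(2-t)^2) := mul_le_mul_of_nonneg_left k1 hp.le
        _ = (t^2*(2+t)*(2-t)^2) * (16+80*t) := by ring
        _ < (t^2*(2+t)*(2-t)^2) * (9*lam) := mul_lt_mul_of_pos_left k2 hq
        _ = lam * (9*t^2*(2-t)^2) * (2+t) := by ring
    linarith
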